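/- Let $U, W: [0,1]^r \to [0,1]$ be bounded measurable and let $F$ be a linear $r$-uniform hypergraph (any two distinct edges share at most one vertex). Then $|t(F,U)-t(F,W)| \le |E(F)| \cdot \|U-W\|_{\square,1}$ (hypergraph counting lemma for linear test hypergraphs in $1$-cut norm), where $t(F,W)=\int_{[0,1]^{V(F)}}\prod_{e=\{v_1,\ldots,v_r\}\in E(F)} W(x_{v_1},\ldots,x_{v_r})\prod_v dx_v$. -/

import Mathlib

open MeasureTheory

noncomputable section

def I01 : Set ℝ := Set.Icc 0 1

def piI (n : ℕ) : Set (Fin n → ℝ) := Set.univ.pi fun _ => I01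

/-- The `1`-cut norm of an `r`-variable kernel. -/
def cutNorm1 (r : ℕ) (U : (Fin r → ℝ) → ℝ) : ℝ :=
  sSup { c : ℝ | ∃ f : Fin r → ℝ → ℝ, (∀ i, Measurable (f i)) ∧ (∀ i x, f i x ∈ I01) ∧
    c = |∫ x in piI r, U x * ∏ i, f i (x i)| }

abbrev mu0 : Measure ℝ := volume.restrict I01

instance : IsProbabilityMeasure mu0 := ⟨by simp [I01, Real.volume_Icc]⟩

abbrev nuI (ι : Type) [Fintype ι] : Measure (ι → ℝ) := Measure.pi fun _ => mu0

instance (ι : Type) [Fintype ι] : IsProbabilityMeasure (nuI ι) := by infer_instance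

lemma restrict_eq_nu (n : ℕ) :
    (volume : Measure (Fin n → ℝ)).restrict (piI n) = nuI (Fin n) := by
  refine (Measure.pi_eq (ι := Fin n) (μ := fun _ => mu0) fun s hs => ?_).symm
  rw [Measure.restrict_apply (MeasurableSet.univ_pi hs)]
  have h1 : Set.univ.pi s ∩ piI n = Set.univ.pi fun i => s i ∩ I01 := by
    rw [piI, ← Set.pi_inter_distrib]
  rw [h1, volume_pi_pi]
  exact Finset.prod_congr rfl fun i _ => (Measure.restrict_apply (hs i)).symm

lemma volume_piI (n : ℕ) : (volume : Measure (Fin n → ℝ)) (piI n) = 1 := by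
  rw [piI, volume_pi_pi]; simp [I01, Real.volume_Icc]

lemma prod_mem_I01 {ι : Type*} (s : Finset ι) (f : ι → ℝ) (h : ∀ i ∈ s, f i ∈ I01) :
    ∏ i ∈ s, f i ∈ I01 :=
  ⟨Finset.prod_nonneg fun i hi => (h i hi).1,
   Finset.prod_le_one (fun i hi => (h i hi).1) fun i hi => (h i hi).2⟩

lemma abs_le_one_of_I01 {u w : ℝ} (hu : u ∈ I01) (hw : w ∈ I01) : |u - w| ≤ 1 := by
  obtain ⟨h1, h2⟩ := hu; obtain ⟨h3, h4⟩ := hw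
  rw [abs_le]; constructor <;> linarith

lemma integrable_bdd {α : Type*} [MeasurableSpace α] {μ : Measure α} [IsFiniteMeasure μ]
    {g : α → ℝ} (hm : Measurable g) (hb : ∀ x, |g x| ≤ 1) : Integrable g μ :=
  Integrable.mono' (integrable_const 1) hm.aestronglyMeasurable
    (Filter.Eventually.of_forall fun x => by simpa [Real.norm_eq_abs] using hb x)

lemma meas_factor {r M : ℕ} {T : (Fin r → ℝ) → ℝ} (hT : Measurable T) (σ : Fin r → Fin M) :
    Measurable fun x : Fin M → ℝ => T fun k => x (σ k) :=
  hT.comp (measurable_pi_lambda _ fun k => measurable_pi_apply _)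

lemma cutNorm1_bddAbove (r : ℕ) (D : (Fin r → ℝ) → ℝ) (hD : Measurable D)
    (hDb : ∀ x, |D x| ≤ 1) :
    BddAbove { c : ℝ | ∃ f : Fin r → ℝ → ℝ, (∀ i, Measurable (f i)) ∧ (∀ i x, f i x ∈ I01) ∧
      c = |∫ x in piI r, D x * ∏ i, f i (x i)| } := by
  refine ⟨1, ?_⟩
  rintro c ⟨f, hf, hr, rfl⟩
  have : ‖∫ x in piI r, D x * ∏ i, f i (x i)‖ ≤ 1 * ((volume : Measure (Fin r → ℝ)) (piI r)).toReal := by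
    refine norm_setIntegral_le_of_norm_le_const (by rw [volume_piI]; exact ENNReal.one_lt_top) ?_
    intro x _
    rw [Real.norm_eq_abs, abs_mul]
    have h1 := hDb x
    have h2 : |∏ i, f i (x i)| ≤ 1 := by
      have := prod_mem_I01 Finset.univ (fun i => f i (x i)) (fun i _ => hr i (x i))
      rw [abs_of_nonneg this.1]; exact this.2
    calc |D x| * |∏ i, f i (x i)| ≤ 1 * 1 := mul_le_mul h1 h2 (abs_nonneg _) zero_le_one
      _ = 1 := by ring
  rw [volume_piI] at this
  simpa [Real.norm_eq_abs] using this

lemma cut_le (r : ℕ) (D : (Fin r → ℝ) → ℝ) (hD : Measurable D) (hDb : ∀ x, |D x| ≤ 1)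
    (f : Fin r → ℝ → ℝ) (hf : ∀ i, Measurable (f i)) (hr : ∀ i x, f i x ∈ I01) :
    |∫ x in piI r, D x * ∏ i, f i (x i)| ≤ cutNorm1 r D :=
  le_csSup (cutNorm1_bddAbove r D hD hDb) ⟨f, hf, hr, rfl⟩

lemma cutNorm1_nonneg (r : ℕ) (D : (Fin r → ℝ) → ℝ) (hD : Measurable D)
    (hDb : ∀ x, |D x| ≤ 1) : 0 ≤ cutNorm1 r D :=
  le_trans (abs_nonneg _)
    (cut_le r D hD hDb (fun _ _ => 0) (fun _ => measurable_const)
      (fun _ _ => ⟨le_refl 0, zero_le_one⟩))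

lemma cut_le_pi (r : ℕ) (D : (Fin r → ℝ) → ℝ) (hD : Measurable D) (hDb : ∀ x, |D x| ≤ 1)
    {ι : Type} [Fintype ι] (σ : Fin r ≃ ι) (g : ι → ℝ → ℝ)
    (hg : ∀ i, Measurable (g i)) (hgr : ∀ i x, g i x ∈ I01) :
    |∫ y, D (fun k => y (σ k)) * ∏ i, g i (y i) ∂ nuI ι| ≤ cutNorm1 r D := by
  have hmp : MeasurePreserving (MeasurableEquiv.piCongrLeft (fun _ : ι => ℝ) σ)
      (nuI (Fin r)) (nuI ι) := measurePreserving_piCongrLeft (fun _ : ι => mu0) σ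
  have hcomp := hmp.integral_comp
    (MeasurableEquiv.piCongrLeft (fun _ : ι => ℝ) σ).measurableEmbedding
    (fun y => D (fun k => y (σ k)) * ∏ i, g i (y i))
  rw [← hcomp]
  have key : ∀ x : Fin r → ℝ,
      D (fun k => (MeasurableEquiv.piCongrLeft (fun _ : ι => ℝ) σ) x (σ k))
        * ∏ i, g i ((MeasurableEquiv.piCongrLeft (fun _ : ι => ℝ) σ) x i)
      = D x * ∏ k, g (σ k) (x k) := by
    intro x
    have happ : ∀ k, (MeasurableEquiv.piCongrLeft (fun _ : ι => ℝ) σ) x (σ k) = x k := by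
      intro k
      rw [MeasurableEquiv.coe_piCongrLeft]
      exact Equiv.piCongrLeft_apply_apply (fun _ : ι => ℝ) σ x k
    congr 1
    · congr 1; funext k; exact happ k
    · rw [← Equiv.prod_comp σ (fun i => g i ((MeasurableEquiv.piCongrLeft (fun _ : ι => ℝ) σ) x i))]
      exact Finset.prod_congr rfl fun k _ => by rw [happ k]
  rw [integral_congr_ae (Filter.Eventually.of_forall key)]
  rw [← restrict_eq_nu r]
  exact cut_le r D hD hDb (fun k => g (σ k)) (fun k => hg (σ k)) (fun k x => hgr (σ k) x)

lemma outer_bound {A B : Type*} [MeasurableSpace A] [MeasurableSpace B]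
    {μ : Measure A} {ν : Measure B} [IsProbabilityMeasure μ] [IsProbabilityMeasure ν]
    {G : A × B → ℝ} (hmeas : Measurable G) (hbd : ∀ q, |G q| ≤ 1) {C : ℝ}
    (hpt : ∀ b, |∫ a, G (a, b) ∂μ| ≤ C) : |∫ q, G q ∂(μ.prod ν)| ≤ C := by
  rw [integral_prod_symm _ (integrable_bdd hmeas hbd)]
  have := norm_integral_le_of_norm_le_const (μ := ν) (C := C)
    (f := fun b => ∫ a, G (a, b) ∂μ)
    (Filter.Eventually.of_forall fun b => by simpa [Real.norm_eq_abs] using hpt b)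
  simpa [Real.norm_eq_abs] using this

lemma keyB (r M : ℕ) (D : (Fin r → ℝ) → ℝ) (hD : Measurable D) (hDb : ∀ x, |D x| ≤ 1)
    (a : Finset (Fin M)) (ha : a.card = r)
    {κ : Type} (rest : Finset κ) (σ : κ → Fin r → Fin M)
    (hone : ∀ j ∈ rest, ∀ k k', σ j k ∈ a → σ j k' ∈ a → σ j k = σ j k')
    (T : κ → (Fin r → ℝ) → ℝ) (hT : ∀ j, Measurable (T j)) (hTr : ∀ j x, T j x ∈ I01) :
    |∫ x, D (fun k => x ((a.orderIsoOfFin ha) k)) * ∏ j ∈ rest, T j (fun k => x (σ j k))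
        ∂ nuI (Fin M)| ≤ cutNorm1 r D := by
  classical
  letI instF : Fintype {i // i ∈ a} := Subtype.fintype _
  set e := MeasurableEquiv.piEquivPiSubtypeProd (π := fun _ : Fin M => ℝ)
    (fun i => i ∈ a) with he
  have hmp := measurePreserving_piEquivPiSubtypeProd (fun _ : Fin M => mu0)
    (fun i => i ∈ a)
  set F : (Fin M → ℝ) → ℝ := fun x =>
    D (fun k => x ((a.orderIsoOfFin ha) k)) * ∏ j ∈ rest, T j (fun k => x (σ j k)) with hF
  have hFmeas : Measurable F := (meas_factor hD _).mul
    (Finset.measurable_prod rest fun j _ => meas_factor (hT j) _)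
  have hFbd : ∀ x, |F x| ≤ 1 := by
    intro x
    rw [hF]
    simp only
    rw [abs_mul]
    have h2 : |∏ j ∈ rest, T j (fun k => x (σ j k))| ≤ 1 := by
      have := prod_mem_I01 rest (fun j => T j (fun k => x (σ j k))) (fun j _ => hTr j _)
      rw [abs_of_nonneg this.1]; exact this.2
    calc |D _| * |∏ j ∈ rest, T j (fun k => x (σ j k))| ≤ 1 * 1 :=
          mul_le_mul (hDb _) h2 (abs_nonneg _) zero_le_one
      _ = 1 := by ring
  have h1 := hmp.integral_comp e.measurableEmbedding (fun q => F (e.symm q))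
  simp only [he, MeasurableEquiv.symm_apply_apply] at h1
  have hsymm : ∀ (y : {i // i ∈ a} → ℝ) (z : {i // ¬ i ∈ a} → ℝ) (m : Fin M),
      e.symm (y, z) m = if h : m ∈ a then y ⟨m, h⟩ else z ⟨m, h⟩ := fun y z m => rfl
  rw [h1]
  refine outer_bound (hFmeas.comp e.symm.measurable) (fun q => hFbd _) ?_
  intro z
  show |∫ y, F (e.symm (y, z)) ∂ _| ≤ _
  classical
  set zext : Fin M → ℝ := fun m => if h : m ∈ a then 0 else z ⟨m, h⟩ with hzext
  set c : ℝ := ∏ j ∈ rest.filter (fun j => ¬ ∃ k, σ j k ∈ a),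
    T j (fun k => zext (σ j k)) with hc
  set f : {i // i ∈ a} → ℝ → ℝ := fun i t =>
    ∏ j ∈ rest.filter (fun j => ∃ k, σ j k = (i : Fin M)),
      T j (fun k => if σ j k = (i : Fin M) then t else zext (σ j k)) with hf
  have hcI : c ∈ I01 := prod_mem_I01 _ _ (fun j _ => hTr j _)
  have hfI : ∀ i t, f i t ∈ I01 := fun i t => prod_mem_I01 _ _ (fun j _ => hTr j _)
  have hfmeas : ∀ i, Measurable (f i) := by
    intro i
    apply Finset.measurable_prod
    intro j _
    apply (hT j).comp
    apply measurable_pi_lambda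
    intro k
    by_cases h : σ j k = (i : Fin M)
    · simp only [h, if_true]; exact measurable_id
    · simp only [h, if_false]; exact measurable_const
  have hiden : ∀ y : {i // i ∈ a} → ℝ,
      F (e.symm (y, z))
        = c * (D (fun k => y ((a.orderIsoOfFin ha).toEquiv k)) * ∏ i, f i (y i)) := by
    intro y
    have hD1 : (fun k => e.symm (y, z) ((a.orderIsoOfFin ha) k))
        = fun k => y ((a.orderIsoOfFin ha).toEquiv k) := by
      funext k
      rw [hsymm, dif_pos ((a.orderIsoOfFin ha) k).2]
      exact congrArg y (Subtype.ext rfl)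
    have hprod : (∏ j ∈ rest, T j (fun k => e.symm (y, z) (σ j k)))
        = c * ∏ i, f i (y i) := by
      rw [← Finset.prod_filter_mul_prod_filter_not rest (fun j => ∃ k, σ j k ∈ a)]
      rw [mul_comm]
      congr 1
      · -- edges missing a
        refine Finset.prod_congr rfl fun j hj => ?_
        rw [Finset.mem_filter] at hj
        congr 1
        funext k
        have hna : σ j k ∉ a := fun h => hj.2 ⟨k, h⟩
        rw [hsymm, dif_neg hna, hzext]
        simp only [dif_neg hna]
      · -- edges meeting a
        have hbi : rest.filter (fun j => ∃ k, σ j k ∈ a)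
            = a.attach.biUnion (fun i => rest.filter (fun j => ∃ k, σ j k = (i : Fin M))) := by
          ext j
          simp only [Finset.mem_filter, Finset.mem_biUnion, Finset.mem_attach, true_and]
          constructor
          · rintro ⟨hj, k, hk⟩
            exact ⟨⟨σ j k, hk⟩, hj, k, rfl⟩
          · rintro ⟨i, hj, k, hk⟩
            exact ⟨hj, k, hk ▸ i.2⟩
        have hdisj : (↑a.attach : Set {x // x ∈ a}).PairwiseDisjoint
            (fun i => rest.filter (fun j => ∃ k, σ j k = (i : Fin M))) := by
          intro i _ i' _ hne
          refine Finset.disjoint_left.mpr ?_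
          intro j hj hj'
          rw [Finset.mem_filter] at hj hj'
          obtain ⟨hjr, k, hk⟩ := hj
          obtain ⟨_, k', hk'⟩ := hj'
          apply hne
          apply Subtype.ext
          rw [← hk, ← hk']
          exact hone j hjr k k' (hk ▸ i.2) (hk' ▸ i'.2)
        rw [hbi, Finset.prod_biUnion hdisj]
        have hattach : (Finset.univ : Finset {i // i ∈ a}) = a.attach := by
          ext i; simp [Finset.mem_attach]
        rw [← hattach]
        refine Finset.prod_congr rfl fun i _ => ?_
        rw [hf]
        refine Finset.prod_congr rfl fun j hj => ?_
        rw [Finset.mem_filter] at hj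
        obtain ⟨hjr, k0, hk0⟩ := hj
        congr 1
        funext k
        by_cases h : σ j k = (i : Fin M)
        · simp only [h, if_true]
          rw [hsymm, dif_pos i.2]
        · simp only [h, if_false]
          have hna : σ j k ∉ a := by
            intro hmem
            exact h (hk0 ▸ hone j hjr k k0 hmem (hk0 ▸ i.2))
          rw [hsymm, dif_neg hna, hzext]
          simp only [dif_neg hna]
    rw [hF]
    simp only
    rw [hD1, hprod]
    ring
  rw [integral_congr_ae (Filter.Eventually.of_forall hiden), integral_const_mul, abs_mul]
  have hcabs : |c| ≤ 1 := by rw [abs_of_nonneg hcI.1]; exact hcI.2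
  refine le_trans (mul_le_mul hcabs ?_ (abs_nonneg _) zero_le_one) (le_of_eq (one_mul _))
  exact @cut_le_pi r D hD hDb {i // i ∈ a} instF ((a.orderIsoOfFin ha).toEquiv) f hfmeas hfI

theorem stmt15 (r M : ℕ) (EF : Finset (Finset (Fin M)))
    (hunif : ∀ e ∈ EF, e.card = r)
    (hlin : ∀ e ∈ EF, ∀ f ∈ EF, e ≠ f → (e ∩ f).card ≤ 1)
    (U W : (Fin r → ℝ) → ℝ)
    (hUmeas : Measurable U) (hWmeas : Measurable W)
    (hUrange : ∀ x, U x ∈ I01) (hWrange : ∀ x, W x ∈ I01) :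
    |(∫ x : Fin M → ℝ in piI M, ∏ e ∈ EF.attach,
        U fun i => x ((e.1.orderIsoOfFin (hunif e.1 e.2)) i))
      - ∫ x : Fin M → ℝ in piI M, ∏ e ∈ EF.attach,
        W fun i => x ((e.1.orderIsoOfFin (hunif e.1 e.2)) i)|
      ≤ EF.card * cutNorm1 r (fun x => U x - W x) := by
  classical
  have hD : Measurable (fun x => U x - W x) := hUmeas.sub hWmeas
  have hDb : ∀ x, |U x - W x| ≤ 1 := fun x => abs_le_one_of_I01 (hUrange x) (hWrange x)
  set σ : {e // e ∈ EF} → Fin r → Fin M :=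
    fun e k => (e.1.orderIsoOfFin (hunif e.1 e.2)) k with hσ
  set P : Finset (Finset (Fin M)) → ℝ := fun s =>
    ∫ x, ∏ e ∈ EF.attach, (if e.1 ∈ s then U else W) (fun k => x (σ e k)) ∂ nuI (Fin M)
    with hP
  have hTm : ∀ (s : Finset (Finset (Fin M))) (j : {e // e ∈ EF}),
      Measurable (if j.1 ∈ s then U else W) := by
    intro s j; split_ifs; exacts [hUmeas, hWmeas]
  have hTrg : ∀ (s : Finset (Finset (Fin M))) (j : {e // e ∈ EF}) x,
      (if j.1 ∈ s then U else W) x ∈ I01 := by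
    intro s j x; split_ifs; exacts [hUrange x, hWrange x]
  have hint : ∀ s : Finset (Finset (Fin M)), Integrable
      (fun x => ∏ e ∈ EF.attach, (if e.1 ∈ s then U else W) (fun k => x (σ e k)))
      (nuI (Fin M)) := by
    intro s
    apply integrable_bdd
    · exact Finset.measurable_prod _ fun e _ => meas_factor (hTm s e) _
    · intro x
      have := prod_mem_I01 EF.attach
        (fun e => (if e.1 ∈ s then U else W) (fun k => x (σ e k)))
        (fun e _ => hTrg s e _)
      rw [abs_of_nonneg this.1]; exact this.2
  have hmain : ∀ s : Finset (Finset (Fin M)), s ⊆ EF →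
      |P s - P ∅| ≤ s.card * cutNorm1 r (fun x => U x - W x) := by
    intro s
    induction s using Finset.induction_on with
    | empty => intro _; simp
    | @insert a s' hans IH =>
      intro hsub
      have haEF : a ∈ EF := hsub (Finset.mem_insert_self a s')
      have hs'EF : s' ⊆ EF := (Finset.subset_insert a s').trans hsub
      have hptwise : ∀ x : Fin M → ℝ,
          (∏ e ∈ EF.attach, (if e.1 ∈ insert a s' then U else W) (fun k => x (σ e k)))
          - (∏ e ∈ EF.attach, (if e.1 ∈ s' then U else W) (fun k => x (σ e k)))
          = (fun v => U v - W v) (fun k => x ((a.orderIsoOfFin (hunif a haEF)) k))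
              * ∏ e ∈ EF.attach.erase ⟨a, haEF⟩,
                  (if e.1 ∈ s' then U else W) (fun k => x (σ e k)) := by
        intro x
        have h1 : (∏ e ∈ EF.attach, (if e.1 ∈ insert a s' then U else W) (fun k => x (σ e k)))
            = U (fun k => x (σ ⟨a, haEF⟩ k)) * ∏ e ∈ EF.attach.erase ⟨a, haEF⟩,
                (if e.1 ∈ s' then U else W) (fun k => x (σ e k)) := by
          rw [← Finset.mul_prod_erase EF.attach _ (Finset.mem_attach EF ⟨a, haEF⟩)]
          congr 1
          · rw [if_pos (Finset.mem_insert_self a s')]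
          · refine Finset.prod_congr rfl fun e he => ?_
            have hne : e.1 ≠ a := fun hh => (Finset.mem_erase.mp he).1 (Subtype.ext hh)
            congr 1
            simp [Finset.mem_insert, hne]
        have h2 : (∏ e ∈ EF.attach, (if e.1 ∈ s' then U else W) (fun k => x (σ e k)))
            = W (fun k => x (σ ⟨a, haEF⟩ k)) * ∏ e ∈ EF.attach.erase ⟨a, haEF⟩,
                (if e.1 ∈ s' then U else W) (fun k => x (σ e k)) := by
          rw [← Finset.mul_prod_erase EF.attach _ (Finset.mem_attach EF ⟨a, haEF⟩)]
          congr 1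
          rw [if_neg hans]
        rw [h1, h2]
        ring
      have hone : ∀ j ∈ EF.attach.erase ⟨a, haEF⟩, ∀ k k',
          σ j k ∈ a → σ j k' ∈ a → σ j k = σ j k' := by
        intro j hj k k' hk hk'
        have hja : j.1 ≠ a := fun hh => (Finset.mem_erase.mp hj).1 (Subtype.ext hh)
        have hcard := hlin j.1 j.2 a haEF hja
        have hm1 : σ j k ∈ j.1 ∩ a :=
          Finset.mem_inter.mpr ⟨((j.1.orderIsoOfFin (hunif j.1 j.2)) k).2, hk⟩
        have hm2 : σ j k' ∈ j.1 ∩ a :=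
          Finset.mem_inter.mpr ⟨((j.1.orderIsoOfFin (hunif j.1 j.2)) k').2, hk'⟩
        exact Finset.card_le_one.mp hcard _ hm1 _ hm2
      have hdiff : P (insert a s') - P s'
          = ∫ x, (fun v => U v - W v) (fun k => x ((a.orderIsoOfFin (hunif a haEF)) k))
              * ∏ e ∈ EF.attach.erase ⟨a, haEF⟩,
                  (if e.1 ∈ s' then U else W) (fun k => x (σ e k)) ∂ nuI (Fin M) := by
        rw [hP]
        simp only
        rw [← integral_sub (hint (insert a s')) (hint s')]
        exact integral_congr_ae (Filter.Eventually.of_forall hptwise)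
      have hb1 : |P (insert a s') - P s'| ≤ cutNorm1 r (fun x => U x - W x) := by
        rw [hdiff]
        exact keyB r M (fun v => U v - W v) hD hDb a (hunif a haEF)
          (EF.attach.erase ⟨a, haEF⟩) σ hone
          (fun j => if j.1 ∈ s' then U else W) (hTm s') (hTrg s')
      calc |P (insert a s') - P ∅|
          ≤ |P (insert a s') - P s'| + |P s' - P ∅| := abs_sub_le _ _ _
        _ ≤ cutNorm1 r (fun x => U x - W x)
            + s'.card * cutNorm1 r (fun x => U x - W x) := add_le_add hb1 (IH hs'EF)
        _ = (insert a s').card * cutNorm1 r (fun x => U x - W x) := by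
            rw [Finset.card_insert_of_notMem hans]
            push_cast
            ring
  have hUP : P EF = ∫ x, ∏ e ∈ EF.attach,
      U (fun i => x ((e.1.orderIsoOfFin (hunif e.1 e.2)) i)) ∂ nuI (Fin M) := by
    rw [hP]
    simp only
    exact integral_congr_ae (Filter.Eventually.of_forall fun x =>
      Finset.prod_congr rfl fun e _ => by rw [if_pos e.2])
  have hWP : P ∅ = ∫ x, ∏ e ∈ EF.attach,
      W (fun i => x ((e.1.orderIsoOfFin (hunif e.1 e.2)) i)) ∂ nuI (Fin M) := by
    rw [hP]
    simp only
    exact integral_congr_ae (Filter.Eventually.of_forall fun x =>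
      Finset.prod_congr rfl fun e _ => by rw [if_neg (Finset.notMem_empty e.1)])
  have e1 : (∫ x : Fin M → ℝ in piI M, ∏ e ∈ EF.attach,
      U fun i => x ((e.1.orderIsoOfFin (hunif e.1 e.2)) i)) = P EF := by
    rw [restrict_eq_nu M, hUP]
  have e2 : (∫ x : Fin M → ℝ in piI M, ∏ e ∈ EF.attach,
      W fun i => x ((e.1.orderIsoOfFin (hunif e.1 e.2)) i)) = P ∅ := by
    rw [restrict_eq_nu M, hWP]
  rw [e1, e2]
  exact hmain EF (subset_refl EF)
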